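/- arXiv:2110.15914 — 2 statements merged into one kernel-verified Lean document; each statement's English description precedes it below -/
import Mathlib

section
/- Let F_X be the CDF of a real random variable X with continuous CDF, and let x ∈ [0,1] be a value attained by F_X (i.e., x ∈ range F_X). Then P(F_X(X) ≤ x) = x. -/
open Set Filter Topology MeasureTheory ProbabilityTheory

/-- if `F` is the continuous CDF of `X` and `x ∈ [0,1]` is attained by `F`,
then `P(F(X) ≤ x) = x`. -/
theorem cdf_transform_at_attained {Ω : Type*} [MeasureSpace Ω]
    [IsProbabilityMeasure (ℙ : Measure Ω)]
    (X : Ω → ℝ) (hX : Measurable X)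
    (F : ℝ → ℝ) (hF : ∀ t, ℙ {ω | X ω ≤ t} = ENNReal.ofReal (F t))
    (hcont : Continuous F)
    (x : ℝ) (hx : x ∈ Icc (0 : ℝ) 1) (hxr : x ∈ Set.range F) :
    ℙ {ω | F (X ω) ≤ x} = ENNReal.ofReal x := by
  obtain ⟨t₀, ht₀⟩ := hxr
  obtain ⟨hx0, hx1⟩ := hx
  have hmono : ∀ ⦃t s : ℝ⦄, t ≤ s → ENNReal.ofReal (F t) ≤ ENNReal.ofReal (F s) := by
    intro t s hts
    rw [← hF, ← hF]
    exact measure_mono fun ω h => le_trans h hts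
  -- lower bound
  have hlow : ENNReal.ofReal x ≤ ℙ {ω | F (X ω) ≤ x} := by
    have heq : ℙ {ω | X ω ≤ t₀} = ENNReal.ofReal x := by rw [hF, ht₀]
    rw [← heq]
    apply measure_mono
    intro ω (h : X ω ≤ t₀)
    show F (X ω) ≤ x
    have h1 := hmono h
    rw [ht₀] at h1
    rcases le_or_gt (F (X ω)) 0 with h0 | h0
    · linarith
    · exact (ENNReal.ofReal_le_ofReal_iff hx0).mp h1
  have hupp : ℙ {ω | F (X ω) ≤ x} ≤ ENNReal.ofReal x := by
    by_cases hS : ∃ s, x < F s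
    · obtain ⟨s₀, hs₀⟩ := hS
      have ht₀s₀ : t₀ ≤ s₀ := by
        by_contra h
        push_neg at h
        have h1 := hmono h.le
        rw [ht₀] at h1
        have h2 : ENNReal.ofReal x < ENNReal.ofReal (F s₀) :=
          (ENNReal.ofReal_lt_ofReal_iff (lt_of_le_of_lt hx0 hs₀)).mpr hs₀
        exact absurd h1 (not_le.mpr h2)
      refine ENNReal.le_of_forall_pos_le_add ?_
      intro ε hε _
      have hεpos : (0 : ℝ) < (ε : ℝ) := hε
      set c := min (x + (ε : ℝ)) (F s₀) with hc
      have hcx : x < c := lt_min (by linarith) hs₀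
      have hcmem : c ∈ Icc (F t₀) (F s₀) := ⟨by rw [ht₀]; exact hcx.le, min_le_right _ _⟩
      obtain ⟨s, _, hs⟩ := intermediate_value_Icc ht₀s₀ hcont.continuousOn hcmem
      have hsub : {ω | F (X ω) ≤ x} ⊆ {ω | X ω ≤ s} := by
        intro ω (h : F (X ω) ≤ x)
        show X ω ≤ s
        by_contra hlt
        push_neg at hlt
        have h1 := hmono hlt.le
        rw [hs] at h1
        have hcpos : (0:ℝ) < c := lt_of_le_of_lt hx0 hcx
        have h2 : c ≤ F (X ω) := by
          rcases le_or_gt (F (X ω)) 0 with h0 | h0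
          · rw [ENNReal.ofReal_eq_zero.mpr h0, nonpos_iff_eq_zero,
              ENNReal.ofReal_eq_zero] at h1
            linarith
          · exact (ENNReal.ofReal_le_ofReal_iff h0.le).mp h1
        linarith
      calc ℙ {ω | F (X ω) ≤ x} ≤ ℙ {ω | X ω ≤ s} := measure_mono hsub
        _ = ENNReal.ofReal (F s) := hF s
        _ = ENNReal.ofReal c := by rw [hs]
        _ ≤ ENNReal.ofReal (x + (ε : ℝ)) := ENNReal.ofReal_le_ofReal (min_le_left _ _)
        _ ≤ ENNReal.ofReal x + ENNReal.ofReal (ε : ℝ) := ENNReal.ofReal_add_le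
        _ = ENNReal.ofReal x + ε := by rw [ENNReal.ofReal_coe_nnreal]
    · push_neg at hS
      have hlim : Tendsto (fun n : ℕ => ENNReal.ofReal (F n)) atTop (𝓝 1) := by
        have h1 : Tendsto (fun n : ℕ => ℙ {ω | X ω ≤ (n : ℝ)}) atTop
            (𝓝 (ℙ (⋃ n : ℕ, {ω | X ω ≤ (n : ℝ)}))) := by
          apply tendsto_measure_iUnion_atTop
          intro a b hab ω h
          show X ω ≤ (b : ℝ)
          exact le_trans h (by exact_mod_cast hab)
        have hU : (⋃ n : ℕ, {ω | X ω ≤ (n : ℝ)}) = univ := by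
          ext ω; simp only [mem_iUnion, mem_univ, iff_true]
          obtain ⟨n, hn⟩ := exists_nat_ge (X ω)
          exact ⟨n, hn⟩
        rw [hU, measure_univ] at h1
        simpa [hF] using h1
      have h1 : (1 : ENNReal) ≤ ENNReal.ofReal x :=
        le_of_tendsto' hlim fun n => ENNReal.ofReal_le_ofReal (hS n)
      exact le_trans prob_le_one h1
  exact le_antisymm hupp hlow
end

section
/- Let X be a real random variable with CDF F_X, and suppose x ∈ [0,1) is not attained by F_X but lies strictly between F_X(z^-) and F_X(z) for some jump point z (so x^+ := F_X(F_X^{-1}(x)) > x). Then P(F_X(X) ≤ x) = P(F_X(X) < x^+) = P(X < z), i.e., the CDF of F_X(X) at x equals the left limit of F_X at the jump point z = F_X^{-1}(x). -/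
open Set Filter Topology MeasureTheory ProbabilityTheory

/-- if `x ∈ [0,1)` is not attained by the CDF `F` of `X` and lies in the jump
of `F` at `z = F⁻¹(x)` (i.e. `F(z⁻) ≤ x < F(z)`), then
`P(F(X) ≤ x) = P(F(X) < x⁺) = P(X < z)`, and this equals the left limit of `F` at `z`. -/
theorem cdf_transform_at_jump {Ω : Type*} [MeasureSpace Ω]
    [IsProbabilityMeasure (ℙ : Measure Ω)]
    (X : Ω → ℝ) (hX : Measurable X)
    (F : ℝ → ℝ) (hF : ∀ t, ℙ {ω | X ω ≤ t} = ENNReal.ofReal (F t))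
    (hmono : Monotone F) (hrc : ∀ t, ContinuousWithinAt F (Ici t) t)
    (x : ℝ) (hx : x ∈ Ico (0 : ℝ) 1) (hxr : x ∉ Set.range F)
    (z : ℝ) (hz : z = sInf {w | x ≤ F w})
    (hjump : Function.leftLim F z ≤ x ∧ x < F z) :
    ℙ {ω | F (X ω) ≤ x} = ℙ {ω | F (X ω) < F z} ∧
    ℙ {ω | F (X ω) ≤ x} = ℙ {ω | X ω < z} ∧
    ℙ {ω | X ω < z} = ENNReal.ofReal (Function.leftLim F z) := by
  obtain ⟨hll, hlt⟩ := hjump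
  have hne : ∀ a, F a ≠ x := fun a h => hxr ⟨a, h⟩
  have key : ∀ a, (F a ≤ x ↔ a < z) := by
    intro a
    constructor
    · intro h
      by_contra hge
      push_neg at hge
      have := hmono hge
      linarith
    · intro h
      have h1 : F a ≤ Function.leftLim F z := hmono.le_leftLim h
      have h2 : F a ≤ x := h1.trans hll
      exact h2
  have hset2 : {ω | F (X ω) ≤ x} = {ω | X ω < z} := by
    ext ω; exact key (X ω)
  have hset1 : {ω | F (X ω) ≤ x} = {ω | F (X ω) < F z} := by
    ext ω
    simp only [mem_setOf_eq]
    constructor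
    · intro h; linarith
    · intro h
      have haz : X ω < z := by
        by_contra hge
        push_neg at hge
        exact absurd (hmono hge) (not_le.mpr h)
      exact (key (X ω)).mpr haz
  refine ⟨by rw [hset1], by rw [hset2], ?_⟩
  -- Part 3
  have hub : {ω | X ω < z} = ⋃ n : ℕ, {ω | X ω ≤ z - 1/(n+1)} := by
    ext ω
    simp only [mem_setOf_eq, mem_iUnion]
    constructor
    · intro h
      obtain ⟨n, hn⟩ := exists_nat_one_div_lt (sub_pos.mpr h)
      exact ⟨n, by push_cast at hn ⊢; linarith⟩
    · rintro ⟨n, hn⟩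
      have h0 : (0:ℝ) < 1/((n:ℝ)+1) := by positivity
      linarith
  have hmonoSets : Monotone (fun n : ℕ => {ω | X ω ≤ z - 1/((n:ℝ)+1)}) := by
    intro m n hmn ω hω
    simp only [mem_setOf_eq] at *
    have : 1/((n:ℝ)+1) ≤ 1/((m:ℝ)+1) := by
      apply one_div_le_one_div_of_le
      · positivity
      · push_cast; exact_mod_cast add_le_add_left (Nat.cast_le.mpr hmn) 1
    linarith
  have htend : Tendsto (fun n : ℕ => ℙ {ω | X ω ≤ z - 1/((n:ℝ)+1)}) atTop
      (𝓝 (ℙ {ω | X ω < z})) := by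
    rw [hub]
    exact tendsto_measure_iUnion_atTop hmonoSets
  have hseq : Tendsto (fun n : ℕ => z - 1/((n:ℝ)+1)) atTop (𝓝[<] z) := by
    apply tendsto_nhdsWithin_of_tendsto_nhds_of_eventually_within
    · have := tendsto_one_div_add_atTop_nhds_zero_nat (𝕜 := ℝ)
      have h := tendsto_const_nhds.sub (f := fun _ : ℕ => z) this
      simpa using h
    · filter_upwards with n
      have h0 : (0:ℝ) < 1/((n:ℝ)+1) := by positivity
      simp only [mem_Iio]
      linarith
  have htend2 : Tendsto (fun n : ℕ => ℙ {ω | X ω ≤ z - 1/((n:ℝ)+1)}) atTop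
      (𝓝 (ENNReal.ofReal (Function.leftLim F z))) := by
    simp only [hF]
    exact (ENNReal.continuous_ofReal.tendsto _).comp ((hmono.tendsto_leftLim z).comp hseq)
  exact tendsto_nhds_unique htend htend2
end
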